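/- As N → ∞ with ε = T/N, the limit of R_N given by the closed form R_N = (κ²Λε/2)[1 + (1/cosh κε)(Σ_{j=1}^{N} 2cosh(κε)sinh(jκε))/sinh((N+1)κε)] equals κΛ (e^{κT} - 1)/(e^{κT} + 1) = κΛ tanh(κT/2). -/

import Mathlib

open Filter

lemma two_sinh_mul (x y : ℝ) :
    2 * Real.sinh x * Real.sinh y = Real.cosh (x + y) - Real.cosh (x - y) := by
  rw [Real.cosh_add, Real.cosh_sub]; ring

lemma sum_sinh (s : ℝ) (N : ℕ) :
    (∑ j ∈ Finset.Icc 1 N, Real.sinh ((j : ℝ) * s)) * (2 * Real.sinh (s / 2))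
      = Real.cosh ((N : ℝ) * s + s / 2) - Real.cosh (s / 2) := by
  induction N with
  | zero => simp
  | succ n ih =>
    rw [Finset.sum_Icc_succ_top (Nat.one_le_iff_ne_zero.mpr (Nat.succ_ne_zero n)), add_mul, ih]
    have h := two_sinh_mul (((n : ℝ) + 1) * s) (s / 2)
    have e2 : ((n : ℝ) + 1) * s - s / 2 = (n : ℝ) * s + s / 2 := by ring
    push_cast
    rw [e2] at h
    nlinarith [h]

lemma sinh_div_self_tendsto :
    Tendsto (fun x : ℝ => Real.sinh x / x) (nhdsWithin 0 {0}ᶜ) (nhds 1) := by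
  have h := hasDerivAt_iff_tendsto_slope.mp (Real.hasDerivAt_sinh 0)
  rw [Real.cosh_zero] at h
  refine h.congr fun x => ?_
  simp [slope_def_field]

lemma half_map : Tendsto (fun s : ℝ => s / 2) (nhdsWithin 0 (Set.Ioi 0)) (nhdsWithin 0 {0}ᶜ) := by
  rw [tendsto_nhdsWithin_iff]
  constructor
  · have : Tendsto (fun s : ℝ => s / 2) (nhds 0) (nhds 0) := by
      simpa using (continuous_id.div_const 2).tendsto (0 : ℝ)
    exact this.mono_left nhdsWithin_le_nhds
  · filter_upwards [self_mem_nhdsWithin] with x hx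
    simp only [Set.mem_compl_iff, Set.mem_singleton_iff]
    have : (0:ℝ) < x := hx
    positivity

lemma nat_map (c : ℝ) (hc : 0 < c) :
    Tendsto (fun N : ℕ => c / N) atTop (nhdsWithin 0 (Set.Ioi 0)) := by
  rw [tendsto_nhdsWithin_iff]
  constructor
  · exact tendsto_const_div_atTop_nhds_zero_nat c
  · filter_upwards [eventually_gt_atTop 0] with N hN
    have : (0:ℝ) < N := by exact_mod_cast hN
    exact Set.mem_Ioi.mpr (by positivity)

theorem stmt_14 (κ T Λ : ℝ) (hκ : 0 < κ) (hT : 0 < T) :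
    Tendsto (fun N : ℕ =>
        (κ ^ 2 * Λ * (T / N) / 2) *
          (1 + (1 / Real.cosh (κ * (T / N))) *
            (∑ j ∈ Finset.Icc 1 N,
                2 * Real.cosh (κ * (T / N)) * Real.sinh ((j : ℝ) * κ * (T / N))) /
              Real.sinh (((N : ℝ) + 1) * κ * (T / N))))
      atTop (nhds (κ * Λ * (Real.exp (κ * T) - 1) / (Real.exp (κ * T) + 1))) ∧
    κ * Λ * (Real.exp (κ * T) - 1) / (Real.exp (κ * T) + 1) = κ * Λ * Real.tanh (κ * T / 2) := by
  have hκT : 0 < κ * T := mul_pos hκ hT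
  have hsinhT : Real.sinh (κ * T) ≠ 0 := ne_of_gt (Real.sinh_pos_iff.mpr hκT)
  have hexp1 : Real.exp (κ * T) + 1 ≠ 0 := by positivity
  have key : (Real.cosh (κ * T) - 1) / Real.sinh (κ * T)
      = (Real.exp (κ * T) - 1) / (Real.exp (κ * T) + 1) := by
    rw [div_eq_div_iff hsinhT hexp1, Real.cosh_eq, Real.sinh_eq, Real.exp_neg]
    have h0 : Real.exp (κ * T) ≠ 0 := (Real.exp_pos _).ne'
    field_simp
    ring
  have hLeq : κ * Λ * (Real.exp (κ * T) - 1) / (Real.exp (κ * T) + 1)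
      = κ * Λ * ((Real.cosh (κ * T) - 1) / Real.sinh (κ * T)) := by
    rw [key, mul_div_assoc]
  constructor
  · rw [hLeq]
    set h : ℝ → ℝ := fun s => κ * Λ * s / 2 +
        κ * Λ * ((s / 2) / Real.sinh (s / 2)) *
          ((Real.cosh (κ * T + s / 2) - Real.cosh (s / 2)) / Real.sinh (κ * T + s)) with hh
    have hA : Tendsto h (nhdsWithin 0 (Set.Ioi 0))
        (nhds (κ * Λ * ((Real.cosh (κ * T) - 1) / Real.sinh (κ * T)))) := by
      have t1 : Tendsto (fun s : ℝ => κ * Λ * s / 2) (nhds 0) (nhds 0) := by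
        have hcont : Continuous (fun s : ℝ => κ * Λ * s / 2) := by continuity
        simpa using hcont.tendsto (0 : ℝ)
      have t2 : Tendsto (fun s : ℝ => (s / 2) / Real.sinh (s / 2))
          (nhdsWithin 0 (Set.Ioi 0)) (nhds 1) := by
        have := (sinh_div_self_tendsto.comp half_map).inv₀ one_ne_zero
        simp only [inv_one] at this
        refine this.congr fun s => ?_
        simp [Function.comp, inv_div]
      have t3 : Tendsto (fun s : ℝ => Real.cosh (κ * T + s / 2) - Real.cosh (s / 2))
          (nhds 0) (nhds (Real.cosh (κ * T) - 1)) := by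
        have c1 : Tendsto (fun s : ℝ => κ * T + s / 2) (nhds 0) (nhds (κ * T)) := by
          simpa [Pi.add_def] using (continuous_const.add (continuous_id.div_const (2:ℝ))).tendsto (0 : ℝ)
        have c2 : Tendsto (fun s : ℝ => s / 2) (nhds (0:ℝ)) (nhds 0) := by
          simpa using (continuous_id.div_const (2:ℝ)).tendsto (0 : ℝ)
        have d1 := (Real.continuous_cosh.tendsto (κ * T)).comp c1
        have d2 := (Real.continuous_cosh.tendsto (0:ℝ)).comp c2
        rw [Real.cosh_zero] at d2
        exact d1.sub d2
      have t4 : Tendsto (fun s : ℝ => Real.sinh (κ * T + s)) (nhds 0)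
          (nhds (Real.sinh (κ * T))) := by
        have c1 : Tendsto (fun s : ℝ => κ * T + s) (nhds 0) (nhds (κ * T)) := by
          simpa [Pi.add_def] using (continuous_const.add continuous_id).tendsto (0 : ℝ)
        exact (Real.continuous_sinh.tendsto (κ * T)).comp c1
      have t34 : Tendsto (fun s : ℝ =>
            (Real.cosh (κ * T + s / 2) - Real.cosh (s / 2)) / Real.sinh (κ * T + s))
          (nhdsWithin 0 (Set.Ioi 0))
          (nhds ((Real.cosh (κ * T) - 1) / Real.sinh (κ * T))) :=
        (t3.mono_left nhdsWithin_le_nhds).div (t4.mono_left nhdsWithin_le_nhds) hsinhT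
      have t1' : Tendsto (fun s : ℝ => κ * Λ * s / 2) (nhdsWithin (0:ℝ) (Set.Ioi 0)) (nhds 0) :=
        t1.mono_left nhdsWithin_le_nhds
      have := t1'.add (((tendsto_const_nhds (x := κ * Λ)).mul t2).mul t34)
      simpa [hh] using this
    have hB : Tendsto (fun N : ℕ => κ * T / N) atTop (nhdsWithin 0 (Set.Ioi 0)) :=
      nat_map _ hκT
    have hC : (fun N : ℕ => h (κ * T / N)) =ᶠ[atTop] (fun N : ℕ =>
        (κ ^ 2 * Λ * (T / N) / 2) *
          (1 + (1 / Real.cosh (κ * (T / N))) *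
            (∑ j ∈ Finset.Icc 1 N,
                2 * Real.cosh (κ * (T / N)) * Real.sinh ((j : ℝ) * κ * (T / N))) /
              Real.sinh (((N : ℝ) + 1) * κ * (T / N)))) := by
      filter_upwards [eventually_ge_atTop 1] with N hN
      have hN0 : (N : ℝ) ≠ 0 := by
        have : (0:ℝ) < N := by exact_mod_cast hN
        exact this.ne'
      set s : ℝ := κ * (T / N) with hs
      have hspos : 0 < s := by
        have : (0:ℝ) < N := by exact_mod_cast hN
        rw [hs]; positivity
      have hseq : κ * T / N = s := by rw [hs]; ring
      have hcosh : Real.cosh s ≠ 0 := (Real.cosh_pos s).ne'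
      have hsinh2 : Real.sinh (s / 2) ≠ 0 := (Real.sinh_pos_iff.mpr (by linarith)).ne'
      have hsinhTs : Real.sinh (κ * T + s) ≠ 0 := (Real.sinh_pos_iff.mpr (by linarith)).ne'
      have hNs : (N : ℝ) * s = κ * T := by rw [hs]; field_simp
      have hN1 : ((N : ℝ) + 1) * κ * (T / N) = κ * T + s := by rw [hs]; field_simp
      have hsumc : (∑ j ∈ Finset.Icc 1 N,
          2 * Real.cosh (κ * (T / N)) * Real.sinh ((j : ℝ) * κ * (T / N)))
          = 2 * Real.cosh s * ∑ j ∈ Finset.Icc 1 N, Real.sinh ((j : ℝ) * s) := by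
        rw [Finset.mul_sum]
        refine Finset.sum_congr rfl fun j _ => ?_
        rw [hs]; ring_nf
      have hsum := sum_sinh s N
      rw [hNs] at hsum
      have hsumval : (∑ j ∈ Finset.Icc 1 N, Real.sinh ((j : ℝ) * s))
          = (Real.cosh (κ * T + s / 2) - Real.cosh (s / 2)) / (2 * Real.sinh (s / 2)) := by
        rw [eq_div_iff (by positivity : (2 : ℝ) * Real.sinh (s / 2) ≠ 0)]
        linarith [hsum]
      rw [hseq, hsumc, hsumval, hN1]
      have hTN : T / N = s / κ := by rw [hs]; field_simp
      rw [hTN, hh]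
      field_simp
    exact (hA.comp hB).congr' hC
  · rw [Real.tanh_eq_sinh_div_cosh, Real.sinh_eq, Real.cosh_eq, Real.exp_neg]
    have h2 : Real.exp (κ * T / 2) * Real.exp (κ * T / 2) = Real.exp (κ * T) := by
      rw [← Real.exp_add]; ring_nf
    have h0 : Real.exp (κ * T / 2) ≠ 0 := (Real.exp_pos _).ne'
    field_simp
    rw [← h2]
    ring
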